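/- Let D be a central division algebra over F with involution * and suppose X^# = A⁻¹X*A on M_n(D) where A is invertible with A* = -A and *|_D = id. Then # is not formally real, i.e., there is a finite sum of nonzero elements of the form X^#·X equal to zero. -/
import Mathlib


open Matrix

/-- If `D` is a field (involution restricting to the identity on `D`), `A ∈ Mₙ(D)` is
invertible with `Aᵀ = -A`, and `X^# = A⁻¹ Xᵀ A`, then `#` is not formally real: there
is a vanishing finite sum of nonzero elements of the form `X^# X`. -/
theorem stmt_9 {D : Type*} [Field D] {n : ℕ} (hn : 0 < n)
    (A : Matrix (Fin n) (Fin n) D) [Invertible A]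
    (hA : Aᵀ = -A) :
    ∃ (k : ℕ) (X : Fin k → Matrix (Fin n) (Fin n) D), 0 < k ∧
      (∀ i, X i ≠ 0) ∧
      (∑ i, (⅟A * (X i)ᵀ * A) * X i) = 0 := by
  have : Nonempty (Fin n) := ⟨⟨0, hn⟩⟩
  by_cases h2 : (2 : D) = 0
  · refine ⟨2, fun _ => 1, by norm_num, fun i => one_ne_zero, ?_⟩
    have hterm : ∀ i : Fin 2, (⅟A * (1 : Matrix (Fin n) (Fin n) D)ᵀ * A) * 1
        = 1 := by
      intro i
      simp [Matrix.transpose_one, invOf_mul_self]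
    rw [Finset.sum_congr rfl (fun i _ => hterm i)]
    simp only [Finset.sum_const, Finset.card_univ, Fintype.card_fin, smul_eq_mul]
    ext a b
    simp [Matrix.one_apply]
    intro hab
    subst hab
    exact h2
  · set i0 : Fin n := ⟨0, hn⟩
    set X : Matrix (Fin n) (Fin n) D := Matrix.single i0 i0 1 with hX
    have hXne : X ≠ 0 := by
      intro h
      have := congrFun (congrFun h i0) i0
      simp [hX, Matrix.single] at this
    have hA0 : A i0 i0 = 0 := by
      have h := congrFun (congrFun hA i0) i0
      simp [Matrix.transpose_apply] at h
      have : (2 : D) * A i0 i0 = 0 := by linear_combination h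
      rcases mul_eq_zero.mp this with h' | h'
      · exact absurd h' h2
      · exact h'
    refine ⟨1, fun _ => X, one_pos, fun _ => hXne, ?_⟩
    have key : Xᵀ * A * X = 0 := by
      ext a b
      simp [hX, Matrix.mul_apply, Matrix.single, Finset.sum_ite_eq,
        Finset.mul_sum, Finset.sum_mul]
      by_cases hb : i0 = b
      · subst hb
        simp only [and_true, eq_self_iff_true]
        by_cases ha : i0 = a
        · subst ha
          simp [Finset.sum_ite_eq, hA0]
        · simp [ha]
      · simp [hb]
    simp only [Finset.sum_const, Finset.card_univ, Fintype.card_fin, one_smul]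
    rw [mul_assoc, mul_assoc, ← mul_assoc Xᵀ, key, mul_zero]
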